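/- Let d₁,…,d_N ∈ (0, 1], κ ≥ 1, and h_i(u) as above. Then G₁(u) = Σ h_i(u)² is constant on [1/κ, 1) and strictly increasing on [1, ∞) (provided not all d_i equal u). Consequently u* = 1/κ minimizes G₁ over [1/κ, ∞). -/
import Mathlib


/-- Case `d₁ ≤ 1` of the Frobenius-norm reduced problem: `G₁` is constant on
`[1/κ, 1)`, strictly increasing on `[1, ∞)`, and minimized at `u* = 1/κ`. -/
theorem G1_min_all_d_le_one (N : ℕ) (hN : 0 < N) (d : ℕ → ℝ) (κ : ℝ)
    (hd : ∀ i < N, 0 < d i ∧ d i ≤ 1) (hκ : 1 ≤ κ)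
    (G : ℝ → ℝ)
    (hG : ∀ u, G u = ∑ i ∈ Finset.range N,
      (|min (κ * u) (max (d i) (max 1 u)) - d i|) ^ 2) :
    (∀ u ∈ Set.Ico (1 / κ) 1, G u = G (1 / κ)) ∧
    StrictMonoOn G (Set.Ici 1) ∧
    (∀ u ∈ Set.Ici (1 / κ), G (1 / κ) ≤ G u) := by
  have hκ0 : 0 < κ := lt_of_lt_of_le one_pos hκ
  have key1 : ∀ u, 1/κ ≤ u → u < 1 →
      G u = ∑ i ∈ Finset.range N, (|1 - d i|) ^ 2 := by
    intro u h1 h2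
    rw [hG]
    refine Finset.sum_congr rfl fun i hi => ?_
    have hdi := hd i (Finset.mem_range.mp hi)
    have hκu : 1 ≤ κ * u := by
      rw [div_le_iff₀ hκ0] at h1; nlinarith
    rw [max_eq_left h2.le, max_eq_right hdi.2, min_eq_right hκu]
  have key2 : ∀ u, 1 ≤ u → G u = ∑ i ∈ Finset.range N, (u - d i) ^ 2 := by
    intro u h1
    rw [hG]
    refine Finset.sum_congr rfl fun i hi => ?_
    have hdi := hd i (Finset.mem_range.mp hi)
    have hdu : d i ≤ u := hdi.2.trans h1
    rw [max_eq_right h1, max_eq_right hdu, min_eq_right (by nlinarith),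
      abs_of_nonneg (by linarith)]
  have hinv : 1/κ ≤ 1 := by rw [div_le_one hκ0]; exact hκ
  have hGinv : G (1/κ) = ∑ i ∈ Finset.range N, (1 - d i) ^ 2 := by
    rcases lt_or_eq_of_le hinv with h | h
    · rw [key1 _ le_rfl h]
      refine Finset.sum_congr rfl fun i hi => ?_
      have hdi := hd i (Finset.mem_range.mp hi)
      rw [abs_of_nonneg (by linarith [hdi.2])]
    · rw [h, key2 1 le_rfl]
  refine ⟨?_, ?_, ?_⟩
  · intro u hu
    rw [key1 u hu.1 hu.2, hGinv]
    refine Finset.sum_congr rfl fun i hi => ?_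
    have hdi := hd i (Finset.mem_range.mp hi)
    rw [abs_of_nonneg (by linarith [hdi.2])]
  · intro u hu v hv huv
    rw [key2 u hu, key2 v hv]
    refine Finset.sum_lt_sum_of_nonempty ⟨0, Finset.mem_range.mpr hN⟩
      fun i hi => ?_
    have hdi := hd i (Finset.mem_range.mp hi)
    have h1 : (1:ℝ) ≤ u := hu
    have h2 : (1:ℝ) ≤ v := hv
    nlinarith [hdi.2]
  · intro u hu
    rcases lt_or_ge u 1 with h | h
    · rw [key1 u hu h, hGinv]
      refine le_of_eq (Finset.sum_congr rfl fun i hi => ?_)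
      have hdi := hd i (Finset.mem_range.mp hi)
      rw [abs_of_nonneg (by linarith [hdi.2])]
    · rw [key2 u h, hGinv]
      refine Finset.sum_le_sum fun i hi => ?_
      have hdi := hd i (Finset.mem_range.mp hi)
      nlinarith [hdi.2]
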